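/- Let x_1,…,x_n be unit vectors in ℂ^d representing pairwise distinct lines (i.e., |⟨x_i,x_j⟩| < 1 for all i ≠ j), and let w_1,…,w_n be positive weights with ∑_i w_i = 1 such that ∑_{i,j} w_i w_j |⟨x_i,x_j⟩|^4 = 2/(d(d+1)). Then n ≥ d². Moreover, if n = d², then w_i = 1/d² for all i and |⟨x_i,x_j⟩|² = (d·δ_{ij} + 1)/(d+1) for all i, j. -/

import Mathlib

open scoped InnerProductSpace ComplexConjugate
open Finset

noncomputable section

def pairVec {ι : Type*} [Fintype ι] (f g : EuclideanSpace ℂ ι) :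
    EuclideanSpace ℂ (ι × ι) := WithLp.toLp 2 (fun r : ι × ι => f r.1 * conj (g r.2))

lemma inner_pairVec {ι : Type*} [Fintype ι] [DecidableEq ι] (f g a b : EuclideanSpace ℂ ι) :
    (inner ℂ (pairVec f g) (pairVec a b) : ℂ) = (inner ℂ f a : ℂ) * conj (inner ℂ g b : ℂ) := by
  simp only [PiLp.inner_apply, RCLike.inner_apply, pairVec]
  rw [Fintype.sum_prod_type, map_sum, Finset.sum_mul_sum]
  congr 1 with r1
  congr 1 with r2
  simp only [map_mul, RingHomCompTriple.comp_apply, RingHom.id_apply, Complex.conj_conj]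
  ring

/-- the diagonal indicator vector -/
def diagVec (d : ℕ) : EuclideanSpace ℂ (Fin d × Fin d) :=
  WithLp.toLp 2 (fun p : Fin d × Fin d => if p.1 = p.2 then (1 : ℂ) else 0)

lemma inner_diagVec_right (d : ℕ) (f : EuclideanSpace ℂ (Fin d × Fin d)) :
    (inner ℂ f (diagVec d) : ℂ) = conj (∑ t, f (t, t)) := by
  simp only [PiLp.inner_apply, RCLike.inner_apply, diagVec, map_sum]
  rw [Fintype.sum_prod_type]
  simp [Finset.sum_ite_eq', mul_ite]

lemma inner_diagVec_self (d : ℕ) : (inner ℂ (diagVec d) (diagVec d) : ℂ) = d := by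
  rw [inner_diagVec_right]
  simp [diagVec, Finset.sum_ite_eq']

def Rmat (d : ℕ) : EuclideanSpace ℂ ((Fin d × Fin d) × (Fin d × Fin d)) :=
  ((d : ℂ) * (d + 1))⁻¹ •
    (∑ p : Fin d × Fin d, pairVec (EuclideanSpace.single p 1) (EuclideanSpace.single p 1)
      + pairVec (diagVec d) (diagVec d))

lemma inner_pair_Rmat (d : ℕ) (f g : EuclideanSpace ℂ (Fin d × Fin d)) :
    (inner ℂ (pairVec f g) (Rmat d) : ℂ)
      = ((inner ℂ f g : ℂ) + conj (∑ t, f (t, t)) * (∑ t, g (t, t))) / ((d : ℂ) * (d + 1)) := by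
  rw [Rmat, inner_smul_right, inner_add_right, inner_sum]
  simp only [inner_pairVec]
  have h1 : ∀ p : Fin d × Fin d,
      (inner ℂ f (EuclideanSpace.single p (1:ℂ)) : ℂ) * conj (inner ℂ g (EuclideanSpace.single p (1:ℂ)) : ℂ)
      = conj (f p) * g p := by
    intro p
    simp [EuclideanSpace.inner_single_right]
  simp only [h1, inner_diagVec_right, Complex.conj_conj]
  rw [div_eq_mul_inv, mul_comm ((d:ℂ)*(d+1))⁻¹]
  congr 2
  simp [PiLp.inner_apply, RCLike.inner_apply, mul_comm]

lemma inner_Rmat_self (d : ℕ) :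
    (inner ℂ (Rmat d) (Rmat d) : ℂ)
      = ((d:ℂ)*(d+1))⁻¹ * ((d:ℂ)*(d+1))⁻¹ * (2 * d * (d+1)) := by
  rw [Rmat, inner_smul_right, inner_smul_left]
  have hc : conj (((d : ℂ) * (d + 1))⁻¹) = ((d : ℂ) * (d + 1))⁻¹ := by
    simp [map_inv₀]
  rw [hc, ← mul_assoc]
  congr 1
  rw [inner_add_left, inner_add_right, inner_add_right, sum_inner]
  simp only [inner_sum, sum_inner, inner_pairVec, inner_diagVec_self, inner_diagVec_right]
  simp only [EuclideanSpace.inner_single_left, EuclideanSpace.inner_single_right,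
    EuclideanSpace.single_apply, diagVec, apply_ite, map_one, map_zero, Complex.conj_conj,
    one_mul, mul_one, mul_ite, ite_mul, mul_zero, zero_mul, Prod.mk.injEq]
  have hS : ∀ x : Fin d × Fin d, (∑ t : Fin d, if (t,t) = x then (1:ℂ) else 0)
      = if x.1 = x.2 then 1 else 0 := by
    rintro ⟨a, b⟩
    simp only [Prod.mk.injEq]
    by_cases h : a = b
    · subst h; simp
    · have h2 : ∀ t : Fin d, ¬(t = a ∧ t = b) := by rintro t ⟨rfl, rfl⟩; exact h rfl
      simp [h2, h]
  simp only [hS, if_true]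
  simp only [apply_ite, map_one, map_zero, ite_mul, one_mul, zero_mul, mul_ite, mul_one, mul_zero]
  simp [Finset.sum_ite_eq, Finset.sum_ite_eq', Fintype.sum_prod_type, Finset.sum_const,
    Finset.card_univ, map_natCast]
  ring


lemma master (d n : ℕ) (hd : 0 < d)
    (x : Fin n → EuclideanSpace ℂ (Fin d)) (hx : ∀ i, ‖x i‖ = 1)
    (w : Fin n → ℝ) (hsum : ∑ i, w i = 1)
    (hdesign : ∑ i, ∑ j, w i * w j * ‖(inner ℂ (x i) (x j) : ℂ)‖ ^ 4 = 2 / (d * (d + 1)))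
    (f g : EuclideanSpace ℂ (Fin d × Fin d)) :
    ∑ k, (w k : ℂ) * ((inner ℂ f (pairVec (x k) (x k)) : ℂ)
        * conj (inner ℂ g (pairVec (x k) (x k)) : ℂ))
      = ((inner ℂ f g : ℂ) + conj (∑ t, f (t, t)) * (∑ t, g (t, t))) / ((d : ℂ) * (d + 1)) := by
  have hdr : ((d : ℝ) * (d + 1)) ≠ 0 := by positivity
  have hd' : ((d : ℂ) * (d + 1)) ≠ 0 := by
    intro hc
    apply hdr
    exact_mod_cast congrArg Complex.re hc
  set Z : Fin n → EuclideanSpace ℂ (Fin d × Fin d) := fun k => pairVec (x k) (x k) with hZ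
  have hZZ : ∀ j k, (inner ℂ (Z j) (Z k) : ℂ)
      = Complex.ofReal (‖(inner ℂ (x j) (x k) : ℂ)‖ ^ 2) := by
    intro j k
    rw [hZ, inner_pairVec, RCLike.mul_conj]
    norm_cast
  have hxx : ∀ k, (inner ℂ (x k) (x k) : ℂ) = 1 := by
    intro k
    rw [inner_self_eq_norm_sq_to_K, hx k]
    norm_num
  have hZself : ∀ k, (inner ℂ (Z k) (Z k) : ℂ) = 1 := by
    intro k
    rw [hZZ, hxx, norm_one]
    norm_num
  have hZdiag : ∀ k, (∑ t, Z k (t, t)) = 1 := by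
    intro k
    have : (∑ t, Z k (t, t)) = (inner ℂ (x k) (x k) : ℂ) := by
      rw [PiLp.inner_apply]
      congr 1 with t
    rw [this, hxx]
  set T : EuclideanSpace ℂ ((Fin d × Fin d) × (Fin d × Fin d)) :=
    ∑ k, (w k : ℂ) • pairVec (Z k) (Z k) with hT
  have hTT : (inner ℂ T T : ℂ) = ((2 / ((d : ℝ) * (d + 1)) : ℝ) : ℂ) := by
    rw [hT, sum_inner]
    rw [show ∑ i, (inner ℂ ((w i : ℂ) • pairVec (Z i) (Z i)) (∑ k, (w k : ℂ) • pairVec (Z k) (Z k)) : ℂ)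
        = ∑ i, ∑ k, conj ((w i : ℂ)) * ((w k : ℂ) * ((inner ℂ (Z i) (Z k) : ℂ) * conj (inner ℂ (Z i) (Z k) : ℂ))) from by
      refine Finset.sum_congr rfl fun i _ => ?_
      rw [inner_sum]
      refine Finset.sum_congr rfl fun k _ => ?_
      rw [inner_smul_left, inner_smul_right, inner_pairVec]]
    rw [← hdesign]
    push_cast
    refine Finset.sum_congr rfl fun i _ => Finset.sum_congr rfl fun k _ => ?_
    rw [hZZ]
    simp only [Complex.conj_ofReal]
    norm_cast
    ring
  have hcast2 : ((2 / ((d : ℝ) * (d + 1)) : ℝ) : ℂ) = 2 / ((d : ℂ) * (d + 1)) := by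
    push_cast
    ring
  have hTR : (inner ℂ T (Rmat d) : ℂ) = ((2 / ((d : ℝ) * (d + 1)) : ℝ) : ℂ) := by
    rw [hcast2]
    rw [hT, sum_inner]
    rw [show ∑ i, (inner ℂ ((w i : ℂ) • pairVec (Z i) (Z i)) (Rmat d) : ℂ)
        = ∑ i, conj ((w i : ℂ)) * (((inner ℂ (Z i) (Z i) : ℂ)
            + conj (∑ t, Z i (t, t)) * (∑ t, Z i (t, t))) / ((d : ℂ) * (d + 1))) from by
      refine Finset.sum_congr rfl fun i _ => ?_
      rw [inner_smul_left, inner_pair_Rmat]]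
    have : ∀ i, conj ((w i : ℂ)) * (((inner ℂ (Z i) (Z i) : ℂ)
            + conj (∑ t, Z i (t, t)) * (∑ t, Z i (t, t))) / ((d : ℂ) * (d + 1)))
        = (w i : ℂ) * (2 / ((d : ℂ) * (d + 1))) := by
      intro i
      rw [hZself, hZdiag, Complex.conj_ofReal]
      norm_num
    rw [Finset.sum_congr rfl fun i _ => this i, ← Finset.sum_mul]
    rw [show ∑ i, ((w i : ℂ)) = ((∑ i, w i : ℝ) : ℂ) from by push_cast; ring, hsum]
    norm_num
  have hRR : (inner ℂ (Rmat d) (Rmat d) : ℂ) = ((2 / ((d : ℝ) * (d + 1)) : ℝ) : ℂ) := by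
    rw [inner_Rmat_self, hcast2]
    field_simp
  have hTeqR : T = Rmat d := by
    have hnorm : ‖T - Rmat d‖ ^ 2 = 0 := by
      rw [norm_sub_sq (𝕜 := ℂ)]
      have h1 : ‖T‖ ^ 2 = 2 / ((d : ℝ) * (d + 1)) := by
        rw [← inner_self_eq_norm_sq (𝕜 := ℂ), hTT]
        exact Complex.ofReal_re _
      have h2 : ‖Rmat d‖ ^ 2 = 2 / ((d : ℝ) * (d + 1)) := by
        rw [← inner_self_eq_norm_sq (𝕜 := ℂ), hRR]
        exact Complex.ofReal_re _
      have h3 : RCLike.re (inner ℂ T (Rmat d) : ℂ) = 2 / ((d : ℝ) * (d + 1)) := by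
        rw [hTR]
        exact Complex.ofReal_re _
      rw [h1, h2, h3]
      ring
    have := pow_eq_zero_iff (n := 2) (by norm_num) |>.mp hnorm
    rwa [norm_eq_zero, sub_eq_zero] at this
  calc ∑ k, (w k : ℂ) * ((inner ℂ f (pairVec (x k) (x k)) : ℂ)
        * conj (inner ℂ g (pairVec (x k) (x k)) : ℂ))
      = (inner ℂ (pairVec f g) T : ℂ) := by
        rw [hT, inner_sum]
        refine Finset.sum_congr rfl fun k _ => ?_
        rw [inner_smul_right, inner_pairVec]
    _ = (inner ℂ (pairVec f g) (Rmat d) : ℂ) := by rw [hTeqR]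
    _ = _ := inner_pair_Rmat d f g


theorem two_design_card_ge_d_sq (d n : ℕ) (hd : 0 < d)
    (x : Fin n → EuclideanSpace ℂ (Fin d)) (hx : ∀ i, ‖x i‖ = 1)
    (hdistinct : ∀ i j, i ≠ j → ‖(inner ℂ (x i) (x j) : ℂ)‖ < 1)
    (w : Fin n → ℝ) (hw : ∀ i, 0 < w i) (hsum : ∑ i, w i = 1)
    (hdesign : ∑ i, ∑ j, w i * w j * ‖(inner ℂ (x i) (x j) : ℂ)‖ ^ 4 = 2 / (d * (d + 1))) :
    d ^ 2 ≤ n ∧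
      (n = d ^ 2 →
        (∀ i, w i = ((d : ℝ) ^ 2)⁻¹) ∧
        (∀ i j, ‖(inner ℂ (x i) (x j) : ℂ)‖ ^ 2 =
          (d * (if i = j then (1 : ℝ) else 0) + 1) / (d + 1))) := by
  classical
  have hdr : ((d : ℝ) * (d + 1)) ≠ 0 := by positivity
  have hd' : ((d : ℂ) * (d + 1)) ≠ 0 := by
    intro hc; apply hdr; exact_mod_cast congrArg Complex.re hc
  set Z : Fin n → EuclideanSpace ℂ (Fin d × Fin d) := fun k => pairVec (x k) (x k) with hZ
  have M := master d n hd x hx w hsum hdesign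
  have hZZ : ∀ j k, (inner ℂ (Z j) (Z k) : ℂ)
      = Complex.ofReal (‖(inner ℂ (x j) (x k) : ℂ)‖ ^ 2) := by
    intro j k
    rw [hZ, inner_pairVec, RCLike.mul_conj]
    norm_cast
  -- Part 1 : the span of the Z's is everything
  have hspan : Submodule.span ℂ (Set.range Z) = ⊤ := by
    rw [← Submodule.orthogonal_eq_bot_iff, Submodule.eq_bot_iff]
    intro c hc
    have horth : ∀ k, (inner ℂ c (pairVec (x k) (x k)) : ℂ) = 0 := by
      intro k
      have h0 : (inner ℂ (Z k) c : ℂ) = 0 :=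
        hc (Z k) (Submodule.subset_span (Set.mem_range_self k))
      have h1 : (inner ℂ c (Z k) : ℂ) = 0 := by rw [← inner_conj_symm, h0, map_zero]
      exact h1
    have hM := M c c
    rw [Finset.sum_eq_zero (fun k _ => by rw [horth k]; simp)] at hM
    have hnum : (inner ℂ c c : ℂ) + conj (∑ t, c (t, t)) * (∑ t, c (t, t)) = 0 :=
      (div_eq_zero_iff.mp hM.symm).resolve_right hd'
    rw [RCLike.conj_mul, inner_self_eq_norm_sq_to_K] at hnum
    have hr : (‖c‖ ^ 2 : ℝ) + ‖∑ t, c (t, t)‖ ^ 2 = 0 := by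
      rw [← RCLike.ofReal_pow, ← RCLike.ofReal_pow, ← RCLike.ofReal_add,
        RCLike.ofReal_eq_zero] at hnum
      exact hnum
    have hc0 : ‖c‖ = 0 := by nlinarith [norm_nonneg c, sq_nonneg (‖∑ t, c (t,t)‖)]
    exact norm_eq_zero.mp hc0
  have hrank : Module.finrank ℂ (EuclideanSpace ℂ (Fin d × Fin d)) = d ^ 2 := by
    rw [finrank_euclideanSpace]
    simp [sq]
  have hge : d ^ 2 ≤ n := by
    have h1 : Module.finrank ℂ (EuclideanSpace ℂ (Fin d × Fin d))
        = Module.finrank ℂ (Submodule.span ℂ (Set.range Z)) := by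
      rw [hspan, finrank_top]
    have h2 := finrank_span_le_card (R := ℂ) (Set.range Z)
    have h3 : (Set.range Z).toFinset.card ≤ n := by
      rw [Set.toFinset_range]
      exact (Finset.card_image_le).trans (by simp)
    rw [← hrank, h1]
    exact h2.trans h3
  refine ⟨hge, fun hn => ?_⟩
  -- restatement of the master identity with Z
  have M' : ∀ f g : EuclideanSpace ℂ (Fin d × Fin d),
      ∑ k, (w k : ℂ) * ((inner ℂ f (Z k) : ℂ) * conj (inner ℂ g (Z k) : ℂ))
        = ((inner ℂ f g : ℂ) + conj (∑ t, f (t, t)) * (∑ t, g (t, t))) / ((d : ℂ) * (d + 1)) := M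
  have hxx : ∀ k, (inner ℂ (x k) (x k) : ℂ) = 1 := by
    intro k
    rw [inner_self_eq_norm_sq_to_K, hx k]
    norm_num
  have hZdiag : ∀ k, (∑ t, Z k (t, t)) = 1 := by
    intro k
    have h1 : (∑ t, Z k (t, t)) = (inner ℂ (x k) (x k) : ℂ) := by
      rw [PiLp.inner_apply]
      congr 1 with t
    rw [h1, hxx]
  set cc : Fin n → Fin n → ℝ := fun i j => ‖(inner ℂ (x i) (x j) : ℂ)‖ ^ 2 with hcc
  have hZZc : ∀ j k, (inner ℂ (Z j) (Z k) : ℂ) = Complex.ofReal (cc j k) := hZZ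
  have ccdiag : ∀ k, cc k k = 1 := by
    intro k
    rw [hcc]
    simp only
    rw [hxx k, norm_one, one_pow]
  have ccsym : ∀ i j, cc i j = cc j i := by
    intro i j
    rw [hcc]
    simp only
    rw [← inner_conj_symm, RCLike.norm_conj]
  have hd0 : ((d:ℝ)) ≠ 0 := Nat.cast_ne_zero.mpr hd.ne'
  have hd1 : ((d:ℝ) + 1) ≠ 0 := by positivity
  -- the quadratic design relations, in real form
  have hstar : ∀ i j, ∑ k, w k * (cc i k * cc j k) = (cc i j + 1) / ((d:ℝ) * (d + 1)) := by
    intro i j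
    have key : ((∑ k, w k * (cc i k * cc j k) : ℝ) : ℂ)
        = (((cc i j + 1) / ((d:ℝ) * (d + 1)) : ℝ) : ℂ) := by
      calc ((∑ k, w k * (cc i k * cc j k) : ℝ) : ℂ)
          = ∑ k, (w k : ℂ) * ((inner ℂ (Z i) (Z k) : ℂ) * conj (inner ℂ (Z j) (Z k) : ℂ)) := by
            rw [Complex.ofReal_sum]
            refine Finset.sum_congr rfl fun k _ => ?_
            rw [hZZc, hZZc, Complex.conj_ofReal]
            push_cast
            ring
        _ = ((inner ℂ (Z i) (Z j) : ℂ)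
              + conj (∑ t, Z i (t, t)) * (∑ t, Z j (t, t))) / ((d : ℂ) * (d + 1)) := M' _ _
        _ = _ := by
            rw [hZZc, hZdiag i, hZdiag j, map_one]
            push_cast
            ring
    exact_mod_cast key
  have hrow : ∀ i, ∑ k, w k * cc i k = (1 + d) / ((d:ℝ) * (d + 1)) := by
    intro i
    have hdg : ∀ k, conj (inner ℂ (diagVec d) (Z k) : ℂ) = 1 := by
      intro k
      rw [inner_conj_symm, inner_diagVec_right, hZdiag k, map_one]
    have hdd : (∑ t, diagVec d (t, t)) = (d : ℂ) := by
      simp [diagVec]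
    have key : ((∑ k, w k * cc i k : ℝ) : ℂ) = (((1 + d) / ((d:ℝ) * (d + 1)) : ℝ) : ℂ) := by
      calc ((∑ k, w k * cc i k : ℝ) : ℂ)
          = ∑ k, (w k : ℂ) * ((inner ℂ (Z i) (Z k) : ℂ) * conj (inner ℂ (diagVec d) (Z k) : ℂ)) := by
            rw [Complex.ofReal_sum]
            refine Finset.sum_congr rfl fun k _ => ?_
            rw [hZZc, hdg k]
            push_cast
            ring
        _ = ((inner ℂ (Z i) (diagVec d) : ℂ)
              + conj (∑ t, Z i (t, t)) * (∑ t, diagVec d (t, t))) / ((d : ℂ) * (d + 1)) := M' _ _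
        _ = _ := by
            rw [inner_diagVec_right, hZdiag i, hdd, map_one]
            push_cast
            ring
    exact_mod_cast key
  -- linear independence of the Z's
  have hli : LinearIndependent ℂ Z := by
    apply linearIndependent_of_top_le_span_of_card_eq_finrank (le_of_eq hspan.symm)
    rw [hrank, Fintype.card_fin, hn]
  set u : Fin n → ℝ := fun k => Real.sqrt (w k) with hu
  have hu2 : ∀ k, u k * u k = w k := fun k => Real.mul_self_sqrt (hw k).le
  have hupos : ∀ k, 0 < u k := fun k => Real.sqrt_pos.mpr (hw k)
  -- THE key pointwise Gram identity
  have key : ∀ j k, u k * u j * cc k j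
      = (if k = j then ((d:ℝ) * (d + 1))⁻¹ else 0) + ((d:ℝ) + 1)⁻¹ * (u k * u j) := by
    intro j
    set m : Fin n → ℝ := fun k => u k * u j * cc k j
      - (if k = j then ((d:ℝ) * (d + 1))⁻¹ else 0) - ((d:ℝ) + 1)⁻¹ * (u k * u j) with hm
    have claimA : ∀ i, ∑ k, (u i * u k * cc i k) * m k = 0 := by
      intro i
      have hterm : ∀ k, (u i * u k * cc i k) * m k
          = (u i * u j) * (w k * (cc i k * cc j k))
            - (if k = j then (u i * u k * cc i k) * ((d:ℝ) * (d + 1))⁻¹ else 0)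
            - ((u i * u j) * ((d:ℝ) + 1)⁻¹) * (w k * cc i k) := by
        intro k
        have h1 := hu2 k
        have h2 : cc k j = cc j k := ccsym k j
        rw [hm]
        simp only
        rw [h2]
        by_cases hk : k = j
        · rw [hk] at h1 ⊢
          simp only [eq_self_iff_true, if_true, if_pos rfl]
          simp only [hcc]
          linear_combination
            (u i * u j * ‖(inner ℂ (x i) (x j) : ℂ)‖ ^ 2
              * (‖(inner ℂ (x j) (x j) : ℂ)‖ ^ 2 - ((d:ℝ) + 1)⁻¹)) * h1
        · simp only [if_neg hk]
          simp only [hcc]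
          linear_combination
            (u i * u j * ‖(inner ℂ (x i) (x k) : ℂ)‖ ^ 2
              * (‖(inner ℂ (x j) (x k) : ℂ)‖ ^ 2 - ((d:ℝ) + 1)⁻¹)) * h1
      calc ∑ k, (u i * u k * cc i k) * m k
          = ∑ k, ((u i * u j) * (w k * (cc i k * cc j k))
              - (if k = j then (u i * u k * cc i k) * ((d:ℝ) * (d + 1))⁻¹ else 0)
              - ((u i * u j) * ((d:ℝ) + 1)⁻¹) * (w k * cc i k)) :=
            Finset.sum_congr rfl fun k _ => hterm k
        _ = (u i * u j) * ((cc i j + 1) / ((d:ℝ) * (d + 1)))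
              - (u i * u j * cc i j) * ((d:ℝ) * (d + 1))⁻¹
              - ((u i * u j) * ((d:ℝ) + 1)⁻¹) * ((1 + d) / ((d:ℝ) * (d + 1))) := by
            rw [Finset.sum_sub_distrib, Finset.sum_sub_distrib, ← Finset.mul_sum, ← Finset.mul_sum,
              hstar i j, hrow i, Finset.sum_ite_eq' Finset.univ j]
            simp
        _ = 0 := by
            field_simp
            ring
    have hS : ∀ i, ∑ k, (m k * u k) * cc i k = 0 := by
      intro i
      have h := claimA i
      have h2 : u i * (∑ k, (m k * u k) * cc i k) = 0 := by
        rw [Finset.mul_sum, ← h]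
        exact Finset.sum_congr rfl fun k _ => by ring
      rcases mul_eq_zero.mp h2 with h' | h'
      · exact absurd h' (hupos i).ne'
      · exact h'
    have hv0 : (inner ℂ (∑ k, ((m k * u k : ℝ) : ℂ) • Z k) (∑ k, ((m k * u k : ℝ) : ℂ) • Z k) : ℂ)
        = 0 := by
      have expand : (inner ℂ (∑ k, ((m k * u k : ℝ) : ℂ) • Z k)
            (∑ k, ((m k * u k : ℝ) : ℂ) • Z k) : ℂ)
          = ∑ i, ∑ k, (((m i * u i) * ((m k * u k) * cc i k) : ℝ) : ℂ) := by
        rw [sum_inner]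
        refine Finset.sum_congr rfl fun i _ => ?_
        rw [inner_smul_left, inner_sum, Finset.mul_sum]
        refine Finset.sum_congr rfl fun k _ => ?_
        rw [inner_smul_right, hZZc, Complex.conj_ofReal]
        push_cast
        ring
      rw [expand]
      refine Finset.sum_eq_zero fun i _ => ?_
      rw [← Complex.ofReal_sum]
      rw [show (∑ k, (m i * u i) * ((m k * u k) * cc i k))
          = (m i * u i) * (∑ k, (m k * u k) * cc i k) from by rw [Finset.mul_sum]]
      rw [hS i, mul_zero, Complex.ofReal_zero]
    have hveq : ∑ k, ((m k * u k : ℝ) : ℂ) • Z k = 0 := inner_self_eq_zero.mp hv0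
    have hm0 : ∀ k, m k = 0 := by
      intro k
      have h := Fintype.linearIndependent_iff.mp hli (fun k => ((m k * u k : ℝ) : ℂ)) hveq k
      have h2 : m k * u k = 0 := by exact_mod_cast h
      rcases mul_eq_zero.mp h2 with h' | h'
      · exact h'
      · exact absurd h' (hupos k).ne'
    intro k
    have h := hm0 k
    rw [hm] at h
    simp only at h
    linarith
  constructor
  · -- weights
    intro i
    have h := key i i
    rw [if_pos rfl, hu2 i, ccdiag i, mul_one] at h
    have : w i * ((d:ℝ)^2) = 1 := by
      field_simp at h
      nlinarith [h]
    have hd2 : ((d:ℝ)^2) ≠ 0 := pow_ne_zero 2 hd0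
    field_simp
    linarith [this]
  · -- overlaps
    intro i j
    by_cases hij : i = j
    · subst hij
      rw [if_pos rfl]
      have : cc i i = 1 := ccdiag i
      rw [hcc] at this
      simp only at this
      rw [this]
      field_simp
    · rw [if_neg hij]
      have h := key j i
      rw [if_neg hij] at h
      have hpos : (0:ℝ) < u i * u j := mul_pos (hupos i) (hupos j)
      have hcij : cc i j = ((d:ℝ) + 1)⁻¹ := by
        have h2 : (u i * u j) * cc i j = (u i * u j) * ((d:ℝ) + 1)⁻¹ := by
          linear_combination h
        exact mul_left_cancel₀ hpos.ne' h2
      have : ‖(inner ℂ (x i) (x j) : ℂ)‖ ^ 2 = ((d:ℝ) + 1)⁻¹ := hcij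
      rw [this]
      field_simp
      ring
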